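/- arXiv:1202.0071 — 2 statements merged into one kernel-verified Lean document; each statement's English description precedes it below -/
import Mathlib

section
/- Let N, N' be semi-free DG B-modules built as in Notation 2.2 (from modules M_i, M'_i and maps α_i, δ_i, α'_i, δ'_i), and let p ∈ ℤ. A sequence of R-linear maps S_i : N_i → N'_{i+p} is a DG B-module homomorphism of degree p if and only if it is a degree-p homomorphism of underlying R-complexes such that each S_i has the block form S_i = [[(-1)^p z_{i-1}, v_i],[0, z_i]] for maps z_i : M_i → M'_{i+p} and v_i : M_i → M'_{i+p-1} satisfying v_{i+j}(γ_{i,s} m_j) = (-1)^{i(p+1)} γ_{i,s} v_j(m_j) and z_{i+j}(γ_{i,s} m_j) = (-1)^{ip} γ_{i,s} z_j(m_j). -/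
namespace DGPaper

/-- The sign `(-1)^n` for an integer `n`. -/
def sgn (n : ℤ) : ℤ := (((-1 : ℤˣ) ^ n : ℤˣ) : ℤ)

variable {R : Type} [CommRing R]

/-- Transport along an equality of indices. -/
def pcast (R : Type) [CommRing R] (X : ℤ → Type) [∀ i, AddCommGroup (X i)] [∀ i, Module R (X i)]
    {i j : ℤ} (h : i = j) : X i ≃ₗ[R] X j := by
  subst h; exact LinearEquiv.refl R (X i)

/-- An `R`-complex, indexed homologically. -/
structure Cx (R : Type) [CommRing R] where
  X : ℤ → Type
  [grp : ∀ i, AddCommGroup (X i)]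
  [mod : ∀ i, Module R (X i)]
  d : ∀ i, X i →ₗ[R] X (i - 1)
  d_sq : ∀ (i : ℤ) (x : X i), d (i - 1) (d i x) = 0

attribute [instance] Cx.grp Cx.mod

/-- The boundary map `X (i+1) → X i`. -/
def Cx.bdry (M : Cx R) (i : ℤ) : M.X (i + 1) →ₗ[R] M.X i :=
  (pcast R M.X (by omega : i + 1 - 1 = i)).toLinearMap ∘ₗ M.d (i + 1)

/-- Vanishing of the `i`-th homology. -/
def Cx.HZeroAt (M : Cx R) (i : ℤ) : Prop :=
  ∀ x : M.X i, M.d i x = 0 → ∃ w : M.X (i + 1), M.bdry i w = x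

/-- The `i`-th homology module of a complex. -/
abbrev Cx.H (M : Cx R) (i : ℤ) :=
  LinearMap.ker (M.d i) ⧸
    (LinearMap.range (M.bdry i)).comap (LinearMap.ker (M.d i)).subtype

/-- A (graded-commutative, nonnegatively graded) DG `R`-algebra. -/
structure DGA (R : Type) [CommRing R] extends Cx R where
  mul : ∀ i j, X i →ₗ[R] X j →ₗ[R] X (i + j)
  one : X 0
  nonneg : ∀ i, i < 0 → ∀ x : X i, x = 0
  one_mul' : ∀ (i : ℤ) (a : X i), pcast R X (zero_add i) (mul 0 i one a) = a
  mul_one' : ∀ (i : ℤ) (a : X i), pcast R X (add_zero i) (mul i 0 a one) = a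
  mul_assoc' : ∀ (i j k : ℤ) (a : X i) (b : X j) (c : X k),
    pcast R X (add_assoc i j k) (mul (i + j) k (mul i j a b) c) = mul i (j + k) a (mul j k b c)
  mul_comm' : ∀ (i j : ℤ) (a : X i) (b : X j),
    mul i j a b = sgn (i * j) • pcast R X (add_comm j i) (mul j i b a)
  sq_zero : ∀ (i : ℤ), Odd i → ∀ a : X i, mul i i a a = 0
  leibniz : ∀ (i j : ℤ) (a : X i) (b : X j),
    d (i + j) (mul i j a b) =
      pcast R X (by omega : i - 1 + j = i + j - 1) (mul (i - 1) j (d i a) b) +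
      sgn i • pcast R X (by omega : i + (j - 1) = i + j - 1) (mul i (j - 1) a (d j b))

/-- A graded module over (the underlying graded algebra of) a DG `R`-algebra `A`. -/
structure GMod (R : Type) [CommRing R] (A : DGA R) where
  X : ℤ → Type
  [grp : ∀ i, AddCommGroup (X i)]
  [mod : ∀ i, Module R (X i)]
  smul : ∀ i j, A.X i →ₗ[R] X j →ₗ[R] X (i + j)
  one_smul' : ∀ (j : ℤ) (m : X j), pcast R X (zero_add j) (smul 0 j A.one m) = m
  mul_smul' : ∀ (i j k : ℤ) (a : A.X i) (b : A.X j) (m : X k),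
    pcast R X (add_assoc i j k) (smul (i + j) k (A.mul i j a b) m) = smul i (j + k) a (smul j k b m)

attribute [instance] GMod.grp GMod.mod

/-- A DG module over a DG `R`-algebra `A`. -/
structure DGM (R : Type) [CommRing R] (A : DGA R) extends GMod R A where
  d : ∀ i, X i →ₗ[R] X (i - 1)
  d_sq : ∀ (i : ℤ) (x : X i), d (i - 1) (d i x) = 0
  leibniz : ∀ (i j : ℤ) (a : A.X i) (m : X j),
    d (i + j) (smul i j a m) =
      pcast R X (by omega : i - 1 + j = i + j - 1) (smul (i - 1) j (A.d i a) m) +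
      sgn i • pcast R X (by omega : i + (j - 1) = i + j - 1) (smul i (j - 1) a (d j m))

/-- Boundary map of a DG module. -/
def DGM.bdry {A : DGA R} (M : DGM R A) (i : ℤ) : M.X (i + 1) →ₗ[R] M.X i :=
  (pcast R M.X (by omega : i + 1 - 1 = i)).toLinearMap ∘ₗ M.d (i + 1)

/-- Vanishing of the `i`-th homology of a DG module. -/
def DGM.HZeroAt {A : DGA R} (M : DGM R A) (i : ℤ) : Prop :=
  ∀ x : M.X i, M.d i x = 0 → ∃ w : M.X (i + 1), M.bdry i w = x

/-- A morphism of DG modules (degree `0`, commuting with differentials and the action). -/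
structure DGMor {A : DGA R} (M N : DGM R A) where
  f : ∀ i, M.X i →ₗ[R] N.X i
  comm_d : ∀ (i : ℤ) (m : M.X i), f (i - 1) (M.d i m) = N.d i (f i m)
  comm_smul : ∀ (i j : ℤ) (a : A.X i) (m : M.X j),
    f (i + j) (M.smul i j a m) = N.smul i j a (f j m)

/-- A morphism of DG modules is an isomorphism if it is bijective in each degree. -/
def DGMor.IsIso {A : DGA R} {M N : DGM R A} (g : DGMor M N) : Prop :=
  ∀ i, Function.Bijective (g.f i)

/-- A morphism of DG modules is a quasiisomorphism if it induces bijections on homology. -/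
def DGMor.IsQuasiIso {A : DGA R} {M N : DGM R A} (g : DGMor M N) : Prop :=
  ∀ i : ℤ,
    (∀ z : M.X i, M.d i z = 0 → (∃ w : N.X (i + 1), N.bdry i w = g.f i z) →
        ∃ v : M.X (i + 1), M.bdry i v = z) ∧
    (∀ y : N.X i, N.d i y = 0 →
        ∃ z : M.X i, M.d i z = 0 ∧ ∃ w : N.X (i + 1), N.bdry i w = y - g.f i z)

/-- Two DG modules are quasiisomorphic if they are linked by a finite zigzag of
quasiisomorphisms. -/
def QuasiIsomorphic {A : DGA R} (M N : DGM R A) : Prop :=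
  Relation.EqvGen (fun P Q : DGM R A => ∃ g : DGMor P Q, g.IsQuasiIso) M N

/-- A homomorphism of DG modules of degree `p` (an element of `Hom_A(M,N)_p`). -/
structure GHom {A : DGA R} (M N : DGM R A) (p : ℤ) where
  f : ∀ j, M.X j →ₗ[R] N.X (j + p)
  compat : ∀ (i j : ℤ) (a : A.X i) (m : M.X j),
    f (i + j) (M.smul i j a m) =
      sgn (p * i) • pcast R N.X (by omega : i + (j + p) = i + j + p) (N.smul i (j + p) a (f j m))

/-- A degree-`p` homomorphism is a cycle in the Hom complex. -/
def GHom.IsCycle {A : DGA R} {M N : DGM R A} {p : ℤ} (c : GHom M N p) : Prop :=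
  ∀ (j : ℤ) (m : M.X j),
    pcast R N.X (by omega : j + p - 1 = j + (p - 1)) (N.d (j + p) (c.f j m)) =
      sgn p • pcast R N.X (by omega : j - 1 + p = j + (p - 1)) (c.f (j - 1) (M.d j m))

/-- A degree-`p` homomorphism is null-homotopic (a boundary in the Hom complex). -/
def GHom.IsBoundary {A : DGA R} {M N : DGM R A} {p : ℤ} (c : GHom M N p) : Prop :=
  ∃ h : GHom M N (p + 1), ∀ (j : ℤ) (m : M.X j),
    c.f j m =
      pcast R N.X (by omega : j + (p + 1) - 1 = j + p) (N.d (j + (p + 1)) (h.f j m)) -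
      sgn (p + 1) • pcast R N.X (by omega : j - 1 + (p + 1) = j + p) (h.f (j - 1) (M.d j m))

/-- Two degree-`p` homomorphisms are homotopic. -/
def GHom.Homotopic {A : DGA R} {M N : DGM R A} {p : ℤ} (c c' : GHom M N p) : Prop :=
  ∃ h : GHom M N (p + 1), ∀ (j : ℤ) (m : M.X j),
    c.f j m - c'.f j m =
      pcast R N.X (by omega : j + (p + 1) - 1 = j + p) (N.d (j + (p + 1)) (h.f j m)) -
      sgn (p + 1) • pcast R N.X (by omega : j - 1 + (p + 1) = j + p) (h.f (j - 1) (M.d j m))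

/-- `e` indexed by `β` is a semi-basis of the graded module `M`:  every element of `M` is
uniquely an `A`-linear combination of the `e`'s, and everything is bounded below. -/
def GSemibasis {A : DGA R} (M : GMod R A) (β : ℤ → Type) (e : ∀ j, β j → M.X j) : Prop :=
  (∃ n : ℤ, ∀ i, i < n → ∀ x : M.X i, x = 0) ∧
  (∃ n : ℤ, ∀ j, j < n → IsEmpty (β j)) ∧
  ∀ k : ℤ,
    letI : DecidableEq (Σ j : ℤ, β j) := Classical.decEq _
    Function.Bijective
    (fun c : DFinsupp (fun p : (Σ j : ℤ, β j) => A.X (k - p.1)) =>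
      DFinsupp.sumAddHom (fun p : (Σ j : ℤ, β j) =>
        ((pcast R M.X (by omega : k - p.1 + p.1 = k)).toLinearMap ∘ₗ
          ((M.smul (k - p.1) p.1).flip (e p.1 p.2))).toAddMonoidHom) c)

/-- A DG module is semi-free if it is bounded below and has a semi-basis. -/
def DGM.IsSemifree {A : DGA R} (M : DGM R A) : Prop :=
  ∃ (β : ℤ → Type) (e : ∀ j, β j → M.X j), GSemibasis M.toGMod β e

/-- A DG module is semi-free with semi-basis finite in each degree. -/
def DGM.IsSemifreeFin {A : DGA R} (M : DGM R A) : Prop :=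
  ∃ (β : ℤ → Type) (e : ∀ j, β j → M.X j), GSemibasis M.toGMod β e ∧ ∀ j, Finite (β j)

/-- Homologically bounded below. -/
def DGM.HBddBelow {A : DGA R} (M : DGM R A) : Prop :=
  ∃ n : ℤ, ∀ i, i < n → M.HZeroAt i

/-- Homologically degreewise finite: each homology module is finitely generated over
`H_0(A)` (equivalently, generated by finitely many cycles with coefficients in `A_0`,
modulo boundaries). -/
def DGM.HDegFin {A : DGA R} (M : DGM R A) : Prop :=
  ∀ i : ℤ, ∃ (k : ℕ) (z : Fin k → M.X i),
    (∀ l, M.d i (z l) = 0) ∧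
    ∀ x : M.X i, M.d i x = 0 → ∃ (a : Fin k → A.X 0) (w : M.X (i + 1)),
      x = (∑ l, pcast R M.X (zero_add i) (M.smul 0 i (a l) (z l))) + M.bdry i w

/-- `Ext^n_A(M,N) = 0`:  computed via any semi-free resolution of `M`, every cycle of
degree `-n` in the Hom complex is null-homotopic. -/
def ExtVanish (A : DGA R) (M N : DGM R A) (n : ℤ) : Prop :=
  ∀ F : DGM R A, F.IsSemifree → ∀ g : DGMor F M, g.IsQuasiIso →
    ∀ c : GHom F N (-n), c.IsCycle → c.IsBoundary

/-- A morphism of DG `R`-algebras. -/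
structure DGAMor (A B : DGA R) where
  f : ∀ i, A.X i →ₗ[R] B.X i
  comm_d : ∀ (i : ℤ) (a : A.X i), f (i - 1) (A.d i a) = B.d i (f i a)
  map_one : f 0 A.one = B.one
  map_mul : ∀ (i j : ℤ) (a : A.X i) (b : A.X j),
    f (i + j) (A.mul i j a b) = B.mul i j (f i a) (f j b)

/-- A family of pairings `B_i ⊗ M_j → U_{i+j}` which is a balanced chain map compatible
with the `B`-action; such data into the base change `B ⊗_A M` is universal. -/
def BalancedFam {A B : DGA R} (φ : DGAMor A B) (M : DGM R A) (U : DGM R B)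
    (σ : ∀ i j, B.X i →ₗ[R] M.X j →ₗ[R] U.X (i + j)) : Prop :=
  (∀ (i j : ℤ) (b : B.X i) (m : M.X j),
      U.d (i + j) (σ i j b m) =
        pcast R U.X (by omega : i - 1 + j = i + j - 1) (σ (i - 1) j (B.d i b) m) +
        sgn i • pcast R U.X (by omega : i + (j - 1) = i + j - 1) (σ i (j - 1) b (M.d j m))) ∧
  (∀ (i' i j : ℤ) (b' : B.X i') (b : B.X i) (m : M.X j),
      U.smul i' (i + j) b' (σ i j b m) =
        pcast R U.X (by omega : i' + i + j = i' + (i + j)) (σ (i' + i) j (B.mul i' i b' b) m)) ∧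
  (∀ (i i' j : ℤ) (b : B.X i) (a : A.X i') (m : M.X j),
      σ (i + i') j (B.mul i i' b (φ.f i' a)) m =
        pcast R U.X (by omega : i + (i' + j) = i + i' + j) (σ i (i' + j) b (M.smul i' j a m)))

/-- Data for the base change `B ⊗_A M`: a DG `B`-module together with the structure
pairing. -/
structure BCData {A B : DGA R} (φ : DGAMor A B) (M : DGM R A) where
  T : DGM R B
  τ : ∀ i j, B.X i →ₗ[R] M.X j →ₗ[R] T.X (i + j)

/-- `D` is (a model for) the base change `B ⊗_A M`: the pairing is balanced, generates,
and is universal among balanced pairings. -/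
def BCData.IsBaseChange {A B : DGA R} {φ : DGAMor A B} {M : DGM R A}
    (D : BCData φ M) : Prop :=
  BalancedFam φ M D.T D.τ ∧
  (∀ (k : ℤ) (x : D.T.X k), ∃ (l : ℕ) (ii : Fin l → ℤ)
      (bb : ∀ s, B.X (ii s)) (mm : ∀ s, M.X (k - ii s)),
      x = ∑ s, pcast R D.T.X (by omega : ii s + (k - ii s) = k)
        (D.τ (ii s) (k - ii s) (bb s) (mm s))) ∧
  ∀ (U : DGM R B) (σ : ∀ i j, B.X i →ₗ[R] M.X j →ₗ[R] U.X (i + j)),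
    BalancedFam φ M U σ →
      ∃! h : DGMor D.T U, ∀ (i j : ℤ) (b : B.X i) (m : M.X j),
        h.f (i + j) (D.τ i j b m) = σ i j b m

/-- `K` is the Koszul complex `K^R(t)` on one element, with degree-one generator `e`. -/
def IsKoszulData (K : DGA R) (t : R) (e : K.X 1) : Prop :=
  (∀ x : K.X 0, ∃! r : R, x = r • K.one) ∧
  (∀ x : K.X 1, ∃! r : R, x = r • e) ∧
  (∀ i : ℤ, i ≠ 0 → i ≠ 1 → ∀ x : K.X i, x = 0) ∧
  K.d 1 e = pcast R K.X (by omega : (0 : ℤ) = 1 - 1) (t • K.one)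

/-- `U` is (a copy of) `R` viewed as a DG `R`-algebra concentrated in degree `0`. -/
def IsUnitDGA (U : DGA R) : Prop :=
  (∀ x : U.X 0, ∃! r : R, x = r • U.one) ∧ ∀ i : ℤ, i ≠ 0 → ∀ x : U.X i, x = 0

/-- `B`, with the two maps `ιK : K → B` and `ιA : A → B`, is the tensor product
DG algebra `K ⊗_R A`. -/
def IsTensor (K A B : DGA R) (ιK : DGAMor K B) (ιA : DGAMor A B) : Prop :=
  ∀ k : ℤ, Function.Bijective
    (fun c : DFinsupp (fun i : ℤ => TensorProduct R (K.X i) (A.X (k - i))) =>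
      DFinsupp.sumAddHom (fun i : ℤ =>
        (TensorProduct.lift
          (((((B.mul i (k - i)).compl₂ (ιA.f (k - i))).comp (ιK.f i)).compr₂
            (pcast R B.X (by omega : i + (k - i) = k)).toLinearMap))).toAddMonoidHom) c)

/-- `K` is the Koszul complex `K^R(t_1, …, t_n)` on the list of elements `ts`,
defined via iterated tensor products of one-element Koszul complexes. -/
def IsKoszulList : DGA R → List R → Prop
  | K, [] => IsUnitDGA K
  | K, t :: ts => ∃ (K1 K' : DGA R) (e : K1.X 1) (ι1 : DGAMor K1 K) (ι' : DGAMor K' K),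
      IsKoszulData K1 t e ∧ IsKoszulList K' ts ∧ IsTensor K1 K' K ι1 ι'

/-- The identification `ε_i : B_i ≅ A_{i-1} ⊕ A_i` (for `B = K^R(t) ⊗_R A`)
determined by `e ⊗ a_{i-1} + 1 ⊗ a_i ↦ (a_{i-1}, a_i)`. -/
def EpsChar {K A B : DGA R} (e : K.X 1) (ιK : DGAMor K B) (ιA : DGAMor A B)
    (ε : ∀ i, B.X i ≃ₗ[R] A.X (i - 1) × A.X i) : Prop :=
  ∀ (i : ℤ) (x : A.X (i - 1)) (y : A.X i),
    (ε i).symm (x, y) =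
      pcast R B.X (by omega : 1 + (i - 1) = i) (B.mul 1 (i - 1) (ιK.f 1 e) (ιA.f (i - 1) x)) +
      ιA.f i y

/-- The DG `B`-module `N` is, via `eN`, of the "pair" shape `N_i = M_{i-1} ⊕ M_i`
with the standard `B = K ⊗ A`-scalar multiplication. -/
def PairShape {A B : DGA R} (ε : ∀ i, B.X i ≃ₗ[R] A.X (i - 1) × A.X i)
    (M : GMod R A) (N : DGM R B) (eN : ∀ i, N.X i ≃ₗ[R] M.X (i - 1) × M.X i) : Prop :=
  ∀ (i j : ℤ) (b : B.X i) (n : N.X j),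
    eN (i + j) (N.smul i j b n) =
      (pcast R M.X (by omega : i - 1 + j = i + j - 1)
          (M.smul (i - 1) j (ε i b).1 (eN j n).2) +
        sgn i • pcast R M.X (by omega : i + (j - 1) = i + j - 1)
          (M.smul i (j - 1) (ε i b).2 (eN j n).1),
       M.smul i j (ε i b).2 (eN j n).2)

/-- `c` is the homothety `χ(a)`, i.e. the degree-`|a|` endomorphism `m ↦ a m`. -/
def IsHomothety {A : DGA R} {M : DGM R A} (i : ℤ) (a : A.X i) (c : GHom M M i) : Prop :=
  ∀ (j : ℤ) (m : M.X j), c.f j m = pcast R M.X (by omega : i + j = j + i) (M.smul i j a m)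

/-- Homologically finite. -/
def DGM.HFinite {A : DGA R} (M : DGM R A) : Prop :=
  M.HDegFin ∧ ∃ n : ℤ, ∀ i : ℤ, (i < -n ∨ n < i) → M.HZeroAt i

/-- The homothety morphism `χ^A_M : A → Hom_A(M,M)` is a quasiisomorphism. -/
def HomothetyQuasiIso (A : DGA R) (M : DGM R A) : Prop :=
  (∀ (i : ℤ) (a : A.X i), ∃ c : GHom M M i, IsHomothety i a c) ∧
  (∀ (i : ℤ) (c : GHom M M i), c.IsCycle →
      ∃ (a : A.X i) (c' : GHom M M i), A.d i a = 0 ∧ IsHomothety i a c' ∧ c.Homotopic c') ∧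
  (∀ (i : ℤ) (a : A.X i) (c : GHom M M i), A.d i a = 0 → IsHomothety i a c →
      c.IsBoundary → ∃ w : A.X (i + 1),
        (pcast R A.X (by omega : i + 1 - 1 = i)) (A.d (i + 1) w) = a)

/-- A semidualizing DG `A`-module. -/
def IsSemidualizing (A : DGA R) (M : DGM R A) : Prop :=
  M.IsSemifree ∧ M.HFinite ∧ HomothetyQuasiIso A M

/-- `C'` is the `n`-th suspension `Σ^n C`. -/
def IsShiftOf {A : DGA R} (n : ℤ) (C C' : DGM R A) : Prop :=
  ∃ g : ∀ i, C.X (i - n) ≃ₗ[R] C'.X i,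
    (∀ (i : ℤ) (x : C.X (i - n)),
        C'.d i (g i x) =
          sgn n • g (i - 1) (pcast R C.X (by omega : i - n - 1 = i - 1 - n) (C.d (i - n) x))) ∧
    (∀ (i j : ℤ) (a : A.X i) (x : C.X (j - n)),
        C'.smul i j a (g j x) =
          sgn (i * n) • g (i + j)
            (pcast R C.X (by omega : i + (j - n) = i + j - n) (C.smul i (j - n) a x)))

/-- `C` and `C'` agree up to shift and quasiisomorphism. -/
def ShiftQuasiIsomorphic {A : DGA R} (C C' : DGM R A) : Prop :=
  ∃ (n : ℤ) (C'' : DGM R A), IsShiftOf n C C'' ∧ QuasiIsomorphic C'' C'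

/-- `H_i(A)` is finitely generated over `H_0(A)` for every `i` (part of `A` being a
noetherian DG algebra). -/
def HSelfDegFin (A : DGA R) : Prop :=
  ∀ i : ℤ, ∃ (k : ℕ) (z : Fin k → A.X i),
    (∀ l, A.d i (z l) = 0) ∧
    ∀ x : A.X i, A.d i x = 0 → ∃ (a : Fin k → A.X 0) (w : A.X (i + 1)),
      x = (∑ l, pcast R A.X (zero_add i) (A.mul 0 i (a l) (z l))) + A.toCx.bdry i w

/-- `q : A_0 → R0` is a presentation of `H_0(A)`:  a surjective multiplicative and
additive map whose kernel consists exactly of the boundaries. -/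
def IsH0Pres (A : DGA R) (R0 : Type) [CommRing R0] (q : A.X 0 → R0) : Prop :=
  (∀ a b : A.X 0, q (a + b) = q a + q b) ∧
  Function.Surjective q ∧
  (∀ x : A.X 0, q x = 0 ↔ ∃ w : A.X (0 + 1), A.toCx.bdry 0 w = x) ∧
  (∀ a b : A.X 0, q (pcast R A.X (zero_add 0) (A.mul 0 0 a b)) = q a * q b) ∧
  q A.one = 1

/-- `A` is a local DG `R`-algebra, witnessed by the presentation `q : A_0 → R0` of
`H_0(A)`:  `A` is noetherian and `H_0(A)` is a local `R`-algebra. -/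
def IsLocalDGAWith [IsLocalRing R] (A : DGA R) (R0 : Type) [CommRing R0]
    (q : A.X 0 → R0) : Prop :=
  IsH0Pres A R0 q ∧ IsNoetherianRing R0 ∧ IsLocalRing R0 ∧
  (∀ r ∈ IsLocalRing.maximalIdeal R, ¬ IsUnit (q (r • A.one))) ∧ HSelfDegFin A


section Aux

variable {R : Type} [CommRing R]

@[simp] theorem pcast_self {X : ℤ → Type} [∀ i, AddCommGroup (X i)] [∀ i, Module R (X i)]
    {i : ℤ} (h : i = i) (x : X i) : pcast R X h x = x := rfl

@[simp] theorem pcast_trans {X : ℤ → Type} [∀ i, AddCommGroup (X i)] [∀ i, Module R (X i)]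
    {i j k : ℤ} (h : i = j) (h' : j = k) (x : X i) :
    pcast R X h' (pcast R X h x) = pcast R X (h.trans h') x := by subst h; rfl

theorem pcast_symm_apply {X : ℤ → Type} [∀ i, AddCommGroup (X i)] [∀ i, Module R (X i)]
    {i j : ℤ} (h : i = j) (x : X j) : (pcast R X h).symm x = pcast R X h.symm x := by
  subst h; rfl

theorem sgn_mul_sgn (a b : ℤ) : sgn a * sgn b = sgn (a + b) := by
  simp [sgn, zpow_add]

theorem GMod.smul_pcast_left {A : DGA R} (M : GMod R A) {i i' j : ℤ} (h : i = i')
    (a : A.X i) (m : M.X j) :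
    M.smul i' j (pcast R A.X h a) m = pcast R M.X (by rw [h]) (M.smul i j a m) := by
  subst h; rfl

theorem GMod.smul_pcast_right {A : DGA R} (M : GMod R A) {i j j' : ℤ} (h : j = j')
    (a : A.X i) (m : M.X j) :
    M.smul i j' a (pcast R M.X h m) = pcast R M.X (by rw [h]) (M.smul i j a m) := by
  subst h; rfl

theorem GMod.one_smul_eq {A : DGA R} (M : GMod R A) (j : ℤ) (m : M.X j) :
    M.smul 0 j A.one m = pcast R M.X (zero_add j).symm m := by
  conv_rhs => rw [← M.one_smul' j m]
  rw [pcast_trans, pcast_self]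

end Aux

set_option maxHeartbeats 4000000 in
theorem bhom_iff_block_form (R : Type) [CommRing R] [IsNoetherianRing R] (t : R)
    (K A B : DGA R) (e : K.X 1) (ιK : DGAMor K B) (ιA : DGAMor A B)
    (hK : IsKoszulData K t e) (hT : IsTensor K A B ιK ιA)
    (hfree : ∀ i, Module.Free R (A.X i)) (hfin : ∀ i, Module.Finite R (A.X i))
    (r : ℤ → ℕ) (b : ∀ i, Module.Basis (Fin (r i)) R (A.X i))
    (ε : ∀ i, B.X i ≃ₗ[R] A.X (i - 1) × A.X i) (hε : EpsChar e ιK ιA ε)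
    (M M' : GMod R A) (N N' : DGM R B)
    (eN : ∀ i, N.X i ≃ₗ[R] M.X (i - 1) × M.X i)
    (eN' : ∀ i, N'.X i ≃ₗ[R] M'.X (i - 1) × M'.X i)
    (hN : PairShape ε M N eN) (hN' : PairShape ε M' N' eN')
    (p : ℤ) (S : ∀ i, N.X i →ₗ[R] N'.X (i + p)) :
    (∀ (i j : ℤ) (bb : B.X i) (nn : N.X j),
        S (i + j) (N.smul i j bb nn) =
          sgn (p * i) • pcast R N'.X (by omega : i + (j + p) = i + j + p)
            (N'.smul i (j + p) bb (S j nn)))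
    ↔ ∃ (z : ∀ i, M.X i →ₗ[R] M'.X (i + p)) (v : ∀ i, M.X i →ₗ[R] M'.X (i + p - 1)),
        (∀ (i : ℤ) (nn : N.X i), eN' (i + p) (S i nn) =
          (sgn p • pcast R M'.X (by omega : i - 1 + p = i + p - 1) (z (i - 1) (eN i nn).1) +
              v i (eN i nn).2,
           z i (eN i nn).2)) ∧
        (∀ (i j : ℤ) (s : Fin (r i)) (m : M.X j),
          v (i + j) (M.smul i j (b i s) m) =
            sgn (i * (p + 1)) • pcast R M'.X (by omega : i + (j + p - 1) = i + j + p - 1)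
              (M'.smul i (j + p - 1) (b i s) (v j m))) ∧
        (∀ (i j : ℤ) (s : Fin (r i)) (m : M.X j),
          z (i + j) (M.smul i j (b i s) m) =
            sgn (i * p) • pcast R M'.X (by omega : i + (j + p) = i + j + p)
              (M'.smul i (j + p) (b i s) (z j m))) := by
  -- cast-commutation helpers for the families involved
  have S_cast : ∀ (k k' : ℤ) (h : k = k') (w : N.X k),
      S k' (pcast R N.X h w) = pcast R N'.X (by rw [h]) (S k w) := by
    intro k k' h w; subst h; rfl
  have eN_cast : ∀ (k k' : ℤ) (h : k = k') (w : N.X k),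
      eN k' (pcast R N.X h w) =
        (pcast R M.X (by rw [h]) (eN k w).1, pcast R M.X h (eN k w).2) := by
    intro k k' h w; subst h; rfl
  have eN'_cast : ∀ (k k' : ℤ) (h : k = k') (w : N'.X k),
      eN' k' (pcast R N'.X h w) =
        (pcast R M'.X (by rw [h]) (eN' k w).1, pcast R M'.X h (eN' k w).2) := by
    intro k k' h w; subst h; rfl
  constructor
  · intro hS
    obtain ⟨zz, hzz⟩ : ∃ zz : ∀ k, M.X k →ₗ[R] M'.X (k + p),
        ∀ (k : ℤ) (x : M.X k), zz k x = (eN' (k + p) (S k ((eN k).symm (0, x)))).2 :=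
      ⟨fun k => LinearMap.snd R (M'.X (k + p - 1)) (M'.X (k + p)) ∘ₗ
        ((eN' (k + p)).toLinearMap ∘ₗ (S k ∘ₗ ((eN k).symm.toLinearMap ∘ₗ
          LinearMap.inr R (M.X (k - 1)) (M.X k)))), fun k x => rfl⟩
    obtain ⟨vv, hvv⟩ : ∃ vv : ∀ k, M.X k →ₗ[R] M'.X (k + p - 1),
        ∀ (k : ℤ) (x : M.X k), vv k x = (eN' (k + p) (S k ((eN k).symm (0, x)))).1 :=
      ⟨fun k => LinearMap.fst R (M'.X (k + p - 1)) (M'.X (k + p)) ∘ₗ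
        ((eN' (k + p)).toLinearMap ∘ₗ (S k ∘ₗ ((eN k).symm.toLinearMap ∘ₗ
          LinearMap.inr R (M.X (k - 1)) (M.X k)))), fun k x => rfl⟩
    have hpart2 : ∀ (i : ℤ) (x : M.X i),
        eN' (i + p) (S i ((eN i).symm (0, x))) = (vv i x, zz i x) := by
      intro i x; rw [hvv, hzz]
    set b1 : B.X 1 := (ε 1).symm (pcast R A.X (by omega : (0:ℤ) = 1 - 1) A.one, 0) with hb1def
    have hb1 : ε 1 b1 = (pcast R A.X (by omega : (0:ℤ) = 1 - 1) A.one, 0) :=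
      (ε 1).apply_symm_apply _
    have hpart1 : ∀ (i : ℤ) (x : M.X (i - 1)),
        eN' (i + p) (S i ((eN i).symm (x, 0))) =
          (sgn p • pcast R M'.X (by omega : i - 1 + p = i + p - 1) (zz (i - 1) x), 0) := by
      intro i x
      have hmm : eN (i - 1) ((eN (i - 1)).symm (0, x)) = (0, x) := (eN (i - 1)).apply_symm_apply _
      have hw : eN (1 + (i - 1)) (N.smul 1 (i - 1) b1 ((eN (i - 1)).symm (0, x))) =
          (pcast R M.X (by omega : i - 1 = 1 + (i - 1) - 1) x, 0) := by
        rw [hN 1 (i - 1) b1 _, hb1, hmm]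
        refine Prod.ext ?_ ?_ <;>
          simp [GMod.smul_pcast_left, GMod.one_smul_eq]
      have key : (eN i).symm (x, 0) =
          pcast R N.X (by omega : 1 + (i - 1) = i)
            (N.smul 1 (i - 1) b1 ((eN (i - 1)).symm (0, x))) := by
        apply (eN i).injective
        rw [(eN i).apply_symm_apply, eN_cast (1 + (i - 1)) i (by omega), hw]
        refine Prod.ext ?_ ?_ <;> simp
      rw [key, S_cast (1 + (i - 1)) i (by omega),
        eN'_cast (1 + (i - 1) + p) (i + p) (by omega), hS 1 (i - 1) b1 _]
      have hand := hN' 1 (i - 1 + p) b1 (S (i - 1) ((eN (i - 1)).symm (0, x)))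
      rw [hb1] at hand
      simp only [map_zsmul, eN'_cast (1 + (i - 1 + p)) (1 + (i - 1) + p) (by omega), hand]
      refine Prod.ext ?_ ?_ <;>
        simp [GMod.smul_pcast_left, GMod.one_smul_eq, ← hzz, mul_one]
    have hblock : ∀ (i : ℤ) (nn : N.X i), eN' (i + p) (S i nn) =
        (sgn p • pcast R M'.X (by omega : i - 1 + p = i + p - 1) (zz (i - 1) (eN i nn).1) +
            vv i (eN i nn).2, zz i (eN i nn).2) := by
      intro i nn
      have hsplit : nn = (eN i).symm ((eN i nn).1, 0) + (eN i).symm (0, (eN i nn).2) := by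
        rw [← map_add, Prod.mk_add_mk, add_zero, zero_add, Prod.mk.eta,
          (eN i).symm_apply_apply]
      conv_lhs => rw [hsplit]
      rw [map_add, map_add, hpart1 i _, hpart2 i _, Prod.mk_add_mk, zero_add]
    refine ⟨zz, vv, hblock, ?_, ?_⟩
    · intro i j s m
      have hbb : ε i ((ε i).symm (0, b i s)) = (0, b i s) := (ε i).apply_symm_apply _
      have hnn : eN j ((eN j).symm (0, m)) = (0, m) := (eN j).apply_symm_apply _
      have hbn : eN (i + j) (N.smul i j ((ε i).symm (0, b i s)) ((eN j).symm (0, m))) =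
          (0, M.smul i j (b i s) m) := by
        rw [hN i j _ _, hbb, hnn]
        refine Prod.ext ?_ ?_ <;> simp
      have hrepr : (eN (i + j)).symm (0, M.smul i j (b i s) m) =
          N.smul i j ((ε i).symm (0, b i s)) ((eN j).symm (0, m)) := by
        rw [← hbn, (eN (i + j)).symm_apply_apply]
      have hand := hN' i (j + p) ((ε i).symm (0, b i s)) (S j ((eN j).symm (0, m)))
      rw [hbb] at hand
      rw [hvv, hrepr, hS i j _ _]
      simp only [map_zsmul, eN'_cast (i + (j + p)) (i + j + p) (by omega), hand]
      simp only [Prod.smul_fst, Prod.smul_snd, Prod.fst, Prod.snd]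
      simp [← hvv, smul_smul, sgn_mul_sgn, show p * i + i = i * (p + 1) by ring]
    · intro i j s m
      have hbb : ε i ((ε i).symm (0, b i s)) = (0, b i s) := (ε i).apply_symm_apply _
      have hnn : eN j ((eN j).symm (0, m)) = (0, m) := (eN j).apply_symm_apply _
      have hbn : eN (i + j) (N.smul i j ((ε i).symm (0, b i s)) ((eN j).symm (0, m))) =
          (0, M.smul i j (b i s) m) := by
        rw [hN i j _ _, hbb, hnn]
        refine Prod.ext ?_ ?_ <;> simp
      have hrepr : (eN (i + j)).symm (0, M.smul i j (b i s) m) =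
          N.smul i j ((ε i).symm (0, b i s)) ((eN j).symm (0, m)) := by
        rw [← hbn, (eN (i + j)).symm_apply_apply]
      have hand := hN' i (j + p) ((ε i).symm (0, b i s)) (S j ((eN j).symm (0, m)))
      rw [hbb] at hand
      rw [hzz, hrepr, hS i j _ _]
      simp only [map_zsmul, eN'_cast (i + (j + p)) (i + j + p) (by omega), hand]
      simp only [Prod.smul_fst, Prod.smul_snd, Prod.fst, Prod.snd]
      simp [← hzz, smul_smul, sgn_mul_sgn, mul_comm]
  · rintro ⟨z, v, hblock, hv, hz⟩
    have z_cast : ∀ (k k' : ℤ) (h : k = k') (x : M.X k),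
        z k' (pcast R M.X h x) = pcast R M'.X (by rw [h]) (z k x) := by
      intro k k' h x; subst h; rfl
    have hz' : ∀ (i j : ℤ) (a : A.X i) (m : M.X j),
        z (i + j) (M.smul i j a m) =
          sgn (i * p) • pcast R M'.X (by omega : i + (j + p) = i + j + p)
            (M'.smul i (j + p) a (z j m)) := by
      intro i j a m
      have hb : (z (i + j) ∘ₗ (M.smul i j).flip m) =
          ((pcast R M'.X (by omega : i + (j + p) = i + j + p)).toLinearMap ∘ₗ
            (M'.smul i (j + p)).flip (sgn (i * p) • z j m)) := by
        apply Module.Basis.ext (b i)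
        intro s
        simpa [map_zsmul] using hz i j s m
      simpa [map_zsmul] using LinearMap.congr_fun hb a
    have hv' : ∀ (i j : ℤ) (a : A.X i) (m : M.X j),
        v (i + j) (M.smul i j a m) =
          sgn (i * (p + 1)) • pcast R M'.X (by omega : i + (j + p - 1) = i + j + p - 1)
            (M'.smul i (j + p - 1) a (v j m)) := by
      intro i j a m
      have hb : (v (i + j) ∘ₗ (M.smul i j).flip m) =
          ((pcast R M'.X (by omega : i + (j + p - 1) = i + j + p - 1)).toLinearMap ∘ₗ
            (M'.smul i (j + p - 1)).flip (sgn (i * (p + 1)) • v j m)) := by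
        apply Module.Basis.ext (b i)
        intro s
        simpa [map_zsmul] using hv i j s m
      simpa [map_zsmul] using LinearMap.congr_fun hb a
    intro i j bb nn
    apply (eN' (i + j + p)).injective
    rw [hblock (i + j) _, hN i j bb nn]
    simp only [map_zsmul, eN'_cast (i + (j + p)) (i + j + p) (by omega),
      hN' i (j + p) bb (S j nn), hblock j nn]
    refine Prod.ext ?_ ?_
    · simp only [Prod.smul_fst, Prod.smul_snd, map_add, map_zsmul, z_cast, hz', hv',
        GMod.smul_pcast_right, pcast_trans, smul_add, smul_smul, sgn_mul_sgn]
      ring_nf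
      abel
    · simp only [Prod.smul_fst, Prod.smul_snd, hz', map_zsmul, smul_smul, sgn_mul_sgn,
        pcast_trans]
      ring_nf


end DGPaper
end

section
/- If (R,𝔪) is a local integral domain that is not a field, Q(R) its fraction field, 0 ≠ t ∈ 𝔪, and F an R-free resolution of Q(R), then both F and the zero complex are quasi-lifts of the zero DG K^R(t)-module to R; i.e., K^R(t) ⊗_R F ≃ 0 ≃ K^R(t) ⊗_R 0, yet F is not quasiisomorphic to 0 over R. -/
namespace DGPaper

variable {R : Type} [CommRing R]

section AuxCast

variable {X Y Z : ℤ → Type} [∀ i, AddCommGroup (X i)] [∀ i, Module R (X i)]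
  [∀ i, AddCommGroup (Y i)] [∀ i, Module R (Y i)] [∀ i, AddCommGroup (Z i)] [∀ i, Module R (Z i)]

@[simp] lemma pcast_rfl {i : ℤ} (h : i = i) (x : X i) : pcast R X h x = x := rfl

@[simp] lemma pcast_pcast {i j k : ℤ} (h1 : i = j) (h2 : j = k) (x : X i) :
    pcast R X h2 (pcast R X h1 x) = pcast R X (h1.trans h2) x := by subst h1; subst h2; rfl

lemma fam_pcast (f : ∀ i, X i →ₗ[R] Y i) {i j : ℤ} (h : i = j) (x : X i) :
    f j (pcast R X h x) = pcast R Y h (f i x) := by subst h; rfl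

lemma dfam_pcast (d : ∀ i, X i →ₗ[R] X (i - 1)) {i j : ℤ} (h : i = j) (x : X i) :
    d j (pcast R X h x) = pcast R X (by rw [h]) (d i x) := by subst h; rfl

lemma fam2_pcast (τ : ∀ i j, X i →ₗ[R] Y j →ₗ[R] Z (i + j)) {i i' j j' : ℤ}
    (h1 : i = i') (h2 : j = j') (b : X i) (m : Y j) :
    τ i' j' (pcast R X h1 b) (pcast R Y h2 m) = pcast R Z (by rw [h1, h2]) (τ i j b m) := by
  subst h1; subst h2; rfl

lemma fam2_pcast_left (τ : ∀ i j, X i →ₗ[R] Y j →ₗ[R] Z (i + j)) {i i' j : ℤ}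
    (h1 : i = i') (b : X i) (m : Y j) :
    τ i' j (pcast R X h1 b) m = pcast R Z (by rw [h1]) (τ i j b m) := by subst h1; rfl

lemma fam2_pcast_right (τ : ∀ i j, X i →ₗ[R] Y j →ₗ[R] Z (i + j)) {i j j' : ℤ}
    (h2 : j = j') (b : X i) (m : Y j) :
    τ i j' b (pcast R Y h2 m) = pcast R Z (by rw [h2]) (τ i j b m) := by subst h2; rfl

lemma pcast_eq_iff {i j : ℤ} (h : i = j) (x : X i) (y : X j) :
    pcast R X h x = y ↔ x = pcast R X h.symm y := by subst h; exact Iff.rfl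

lemma pcast_eq_zero_iff {i j : ℤ} (h : i = j) (x : X i) :
    pcast R X h x = 0 ↔ x = 0 := by subst h; exact Iff.rfl

end AuxCast

/-- Extract the coefficient of an element in a rank-one free piece. -/
noncomputable def coefMap {M : Type} [AddCommGroup M] [Module R M] (v : M)
    (h : ∀ x : M, ∃! r : R, x = r • v) : M →ₗ[R] R where
  toFun x := (h x).choose
  map_add' x y := by
    refine ((h (x + y)).choose_spec.2 _ ?_).symm
    show x + y = ((h x).choose + (h y).choose) • v
    rw [add_smul, ← (h x).choose_spec.1, ← (h y).choose_spec.1]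
  map_smul' r x := by
    refine ((h (r • x)).choose_spec.2 _ ?_).symm
    show r • x = (r * (h x).choose) • v
    rw [mul_smul, ← (h x).choose_spec.1]

lemma coefMap_spec {M : Type} [AddCommGroup M] [Module R M] (v : M)
    (h : ∀ x : M, ∃! r : R, x = r • v) (x : M) : x = coefMap v h x • v :=
  (h x).choose_spec.1

lemma coefMap_smul_self {M : Type} [AddCommGroup M] [Module R M] (v : M)
    (h : ∀ x : M, ∃! r : R, x = r • v) (r : R) : coefMap v h (r • v) = r :=
  ((h (r • v)).choose_spec.2 r rfl).symm

lemma coefMap_self {M : Type} [AddCommGroup M] [Module R M] (v : M)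
    (h : ∀ x : M, ∃! r : R, x = r • v) : coefMap v h v = 1 :=
  ((h v).choose_spec.2 1 (one_smul R v).symm).symm

section QIS

variable {A : DGA R}

lemma DGMor.comm_bdry {M N : DGM R A} (g : DGMor M N) (i : ℤ) (v : M.X (i + 1)) :
    g.f i (M.bdry i v) = N.bdry i (g.f (i + 1) v) := by
  show g.f i (pcast R M.X _ (M.d (i+1) v)) = pcast R N.X _ (N.d (i+1) (g.f (i+1) v))
  rw [fam_pcast g.f, g.comm_d]

lemma hzero_iff_of_qis {M N : DGM R A} (g : DGMor M N) (hg : g.IsQuasiIso) (i : ℤ) :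
    M.HZeroAt i ↔ N.HZeroAt i := by
  constructor
  · intro hM y hy
    obtain ⟨z, hz, w, hw⟩ := (hg i).2 y hy
    obtain ⟨v, hv⟩ := hM z hz
    refine ⟨w + g.f (i + 1) v, ?_⟩
    rw [map_add, hw, ← g.comm_bdry i v, hv]
    abel
  · intro hN z hz
    have h0 : N.d i (g.f i z) = 0 := by rw [← g.comm_d, hz, map_zero]
    obtain ⟨w, hw⟩ := hN _ h0
    exact (hg i).1 z hz ⟨w, hw⟩

lemma hzero_zero_of_qiso {M N : DGM R A} (h : QuasiIsomorphic M N) :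
    M.HZeroAt 0 ↔ N.HZeroAt 0 := by
  induction h with
  | rel _ _ hr => obtain ⟨g, hg⟩ := hr; exact hzero_iff_of_qis g hg 0
  | refl => exact Iff.rfl
  | symm _ _ _ ih => exact ih.symm
  | trans _ _ _ _ _ ih1 ih2 => exact ih1.trans ih2

end QIS
section Koszul

variable {K : DGA R} {t : R} {e : K.X 1}

/-- Coefficient map in degree 0 of the Koszul complex. -/
noncomputable def kc0 (hK : IsKoszulData K t e) : K.X 0 →ₗ[R] R := coefMap K.one hK.1

/-- Coefficient map in degree 1 of the Koszul complex. -/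
noncomputable def kc1 (hK : IsKoszulData K t e) : K.X 1 →ₗ[R] R := coefMap e hK.2.1

lemma kc0_spec (hK : IsKoszulData K t e) (x : K.X 0) : x = kc0 hK x • K.one :=
  coefMap_spec _ _ x

lemma kc1_spec (hK : IsKoszulData K t e) (x : K.X 1) : x = kc1 hK x • e :=
  coefMap_spec _ _ x

@[simp] lemma kc0_one (hK : IsKoszulData K t e) : kc0 hK K.one = 1 := coefMap_self _ _

@[simp] lemma kc1_e (hK : IsKoszulData K t e) : kc1 hK e = 1 := coefMap_self _ _

@[simp] lemma kc0_smul_one (hK : IsKoszulData K t e) (r : R) : kc0 hK (r • K.one) = r :=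
  coefMap_smul_self _ _ r

lemma Kzero (i : ℤ) (h0 : i ≠ 0) (h1 : i ≠ 1) (x : K.X i) (hK : IsKoszulData K t e) : x = 0 :=
  hK.2.2.1 i h0 h1 x

lemma Kmul_one_one (hK : IsKoszulData K t e) :
    K.mul 0 0 K.one K.one = pcast R K.X (by norm_num : (0:ℤ) = 0 + 0) K.one := by
  have h := K.one_mul' 0 K.one
  rw [pcast_eq_iff] at h
  exact h

lemma Kmul00 (hK : IsKoszulData K t e) (a b : K.X 0) :
    K.mul 0 0 a b = pcast R K.X (by norm_num : (0:ℤ) = 0 + 0) ((kc0 hK a * kc0 hK b) • K.one) := by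
  conv_lhs => rw [kc0_spec hK a, kc0_spec hK b]
  rw [map_smul, LinearMap.map_smul₂, Kmul_one_one hK, map_smul, smul_smul, mul_comm]

lemma Kmul_one_e (hK : IsKoszulData K t e) :
    K.mul 0 1 K.one e = pcast R K.X (by norm_num : (1:ℤ) = 0 + 1) e := by
  have h := K.one_mul' 1 e
  rw [pcast_eq_iff] at h
  exact h

lemma Kmul_e_one (hK : IsKoszulData K t e) :
    K.mul 1 0 e K.one = pcast R K.X (by norm_num : (1:ℤ) = 1 + 0) e := by
  have h := K.mul_one' 1 e
  rw [pcast_eq_iff] at h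
  exact h

lemma Kmul01 (hK : IsKoszulData K t e) (a : K.X 0) (b : K.X 1) :
    K.mul 0 1 a b = pcast R K.X (by norm_num : (1:ℤ) = 0 + 1) ((kc0 hK a * kc1 hK b) • e) := by
  conv_lhs => rw [kc0_spec hK a, kc1_spec hK b]
  rw [map_smul, LinearMap.map_smul₂, Kmul_one_e hK, map_smul, smul_smul, mul_comm]

lemma Kmul10 (hK : IsKoszulData K t e) (a : K.X 1) (b : K.X 0) :
    K.mul 1 0 a b = pcast R K.X (by norm_num : (1:ℤ) = 1 + 0) ((kc1 hK a * kc0 hK b) • e) := by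
  conv_lhs => rw [kc1_spec hK a, kc0_spec hK b]
  rw [map_smul, LinearMap.map_smul₂, Kmul_e_one hK, map_smul, smul_smul, mul_comm]

lemma Kmul11 (hK : IsKoszulData K t e) (a b : K.X 1) : K.mul 1 1 a b = 0 := by
  conv_lhs => rw [kc1_spec hK a, kc1_spec hK b]
  rw [map_smul, LinearMap.map_smul₂, K.sq_zero 1 odd_one e, smul_zero, smul_zero]

lemma Kd_zero (hK : IsKoszulData K t e) (x : K.X 0) : K.d 0 x = 0 :=
  K.nonneg _ (by norm_num) _

lemma Kd_one (hK : IsKoszulData K t e) (x : K.X 1) :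
    K.d 1 x = pcast R K.X (by norm_num : (0:ℤ) = 1 - 1) ((kc1 hK x * t) • K.one) := by
  conv_lhs => rw [kc1_spec hK x]
  rw [map_smul, hK.2.2.2, map_smul, smul_smul]
  exact (map_smul _ _ _).symm

end Koszul
@[simp] lemma sgn_zero : sgn 0 = 1 := by norm_num [sgn]
@[simp] lemma sgn_one : sgn 1 = -1 := by norm_num [sgn]

section NCon

variable {K : DGA R} {t : R} {e : K.X 1} {U : DGA R}

@[simp] lemma kc1_smul_e (hK : IsKoszulData K t e) (r : R) : kc1 hK (r • e) = r :=
  coefMap_smul_self _ _ r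

/-- The underlying graded module of the cone of `t` on `F`. -/
abbrev NX (F : DGM R U) (i : ℤ) : Type := F.X (i - 1) × F.X i

@[simp] lemma pcast_NX (F : DGM R U) {i j : ℤ} (h : i = j) (p : NX F i) :
    pcast R (NX F) h p = (pcast R F.X (by rw [h]) p.1, pcast R F.X h p.2) := by
  subst h; rfl

/-- Differential of the cone. -/
def Nd (t : R) (F : DGM R U) (j : ℤ) : NX F j →ₗ[R] NX F (j - 1) where
  toFun n := (-(F.d (j - 1) n.1), t • n.1 + F.d j n.2)
  map_add' a b := by
    simp only [Prod.fst_add, Prod.snd_add, map_add, Prod.mk_add_mk, Prod.mk.injEq]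
    constructor <;> module
  map_smul' r a := by
    simp only [Prod.smul_fst, Prod.smul_snd, map_smul, RingHom.id_apply, Prod.smul_mk,
      Prod.mk.injEq]
    constructor <;> module

@[simp] lemma Nd_apply (F : DGM R U) (j : ℤ) (n : NX F j) :
    Nd t F j n = (-(F.d (j - 1) n.1), t • n.1 + F.d j n.2) := rfl

@[simp] lemma Fd_pcast (F : DGM R U) {i j : ℤ} (h : i = j) (x : F.X i) :
    F.d j (pcast R F.X h x) = pcast R F.X (by rw [h]) (F.d i x) := dfam_pcast F.d h x

noncomputable def s0 (hK : IsKoszulData K t e) (F : DGM R U) (j : ℤ) :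
    K.X 0 →ₗ[R] NX F j →ₗ[R] NX F (0 + j) :=
  LinearMap.mk₂ R (fun b n => kc0 hK b • pcast R (NX F) (show j = 0 + j by omega) n)
    (fun b b' n => by beta_reduce; rw [map_add, add_smul])
    (fun r b n => by beta_reduce; rw [map_smul, smul_assoc])
    (fun b n n' => by beta_reduce; rw [map_add, smul_add])
    (fun r b n => by beta_reduce; rw [map_smul, smul_comm])

noncomputable def s1 (hK : IsKoszulData K t e) (F : DGM R U) (j : ℤ) :
    K.X 1 →ₗ[R] NX F j →ₗ[R] NX F (1 + j) :=
  LinearMap.mk₂ R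
    (fun b n => (pcast R F.X (show j = 1 + j - 1 by omega) (kc1 hK b • n.2), (0 : F.X (1 + j))))
    (fun b b' n => by simp only [map_add, add_smul, Prod.mk_add_mk, add_zero])
    (fun r b n => by simp only [map_smul, smul_assoc, Prod.smul_mk, smul_zero])
    (fun b n n' => by simp only [Prod.snd_add, smul_add, map_add, Prod.mk_add_mk, add_zero])
    (fun r b n => by beta_reduce; rw [Prod.smul_snd, smul_comm, map_smul, Prod.smul_mk, smul_zero])

noncomputable def Nsmul (hK : IsKoszulData K t e) (F : DGM R U) (i j : ℤ) :
    K.X i →ₗ[R] NX F j →ₗ[R] NX F (i + j) :=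
  if h0 : i = 0 then
    ((s0 hK F j).comp (pcast R K.X h0).toLinearMap).compr₂
      (pcast R (NX F) (show 0 + j = i + j by omega)).toLinearMap
  else if h1 : i = 1 then
    ((s1 hK F j).comp (pcast R K.X h1).toLinearMap).compr₂
      (pcast R (NX F) (show 1 + j = i + j by omega)).toLinearMap
  else 0

lemma Nsmul_at0 (hK : IsKoszulData K t e) (F : DGM R U) {i : ℤ} (h0 : i = 0) (j : ℤ)
    (b : K.X i) (n : NX F j) :
    Nsmul hK F i j b n = pcast R (NX F) (show 0 + j = i + j by omega)
      (kc0 hK (pcast R K.X h0 b) • pcast R (NX F) (show j = 0 + j by omega) n) := by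
  subst h0; rw [Nsmul, dif_pos rfl]; rfl

lemma Nsmul_at1 (hK : IsKoszulData K t e) (F : DGM R U) {i : ℤ} (h1 : i = 1) (j : ℤ)
    (b : K.X i) (n : NX F j) :
    Nsmul hK F i j b n = pcast R (NX F) (show 1 + j = i + j by omega)
      ((pcast R F.X (show j = 1 + j - 1 by omega) (kc1 hK (pcast R K.X h1 b) • n.2)),
        (0 : F.X (1 + j))) := by
  subst h1; rw [Nsmul, dif_neg one_ne_zero, dif_pos rfl]; rfl

lemma Nsmul_other (hK : IsKoszulData K t e) (F : DGM R U) {i : ℤ} (h0 : i ≠ 0) (h1 : i ≠ 1)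
    (j : ℤ) (b : K.X i) (n : NX F j) : Nsmul hK F i j b n = 0 := by
  rw [Nsmul, dif_neg h0, dif_neg h1]; rfl

end NCon
section NDGMsec

variable {K : DGA R} {t : R} {e : K.X 1} {U : DGA R}

lemma Nd_sq (F : DGM R U) (j : ℤ) (n : NX F j) : Nd t F (j - 1) (Nd t F j n) = 0 := by
  simp [Prod.ext_iff, F.d_sq]

lemma None_smul (hK : IsKoszulData K t e) (F : DGM R U) (j : ℤ) (m : NX F j) :
    pcast R (NX F) (zero_add j) (Nsmul hK F 0 j K.one m) = m := by
  rw [Nsmul_at0 hK F rfl j]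
  simp

lemma Nmul_smul (hK : IsKoszulData K t e) (F : DGM R U) (i j k : ℤ) (a : K.X i) (b : K.X j)
    (m : NX F k) :
    pcast R (NX F) (add_assoc i j k) (Nsmul hK F (i + j) k (K.mul i j a b) m) =
      Nsmul hK F i (j + k) a (Nsmul hK F j k b m) := by
  by_cases hi0 : i = 0
  · subst hi0
    by_cases hj0 : j = 0
    · subst hj0
      rw [Kmul00 hK a b, Nsmul_at0 hK F (by norm_num : (0:ℤ) + 0 = 0) k,
          Nsmul_at0 hK F rfl k, Nsmul_at0 hK F rfl (0 + k)]
      simp [smul_smul]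
    · by_cases hj1 : j = 1
      · subst hj1
        rw [Kmul01 hK a b, Nsmul_at1 hK F (by norm_num : (0:ℤ) + 1 = 1) k,
            Nsmul_at1 hK F rfl k, Nsmul_at0 hK F rfl (1 + k)]
        simp [smul_smul]
      · have hb : b = 0 := hK.2.2.1 j hj0 hj1 b
        simp [hb]
  · by_cases hi1 : i = 1
    · subst hi1
      by_cases hj0 : j = 0
      · subst hj0
        rw [Kmul10 hK a b, Nsmul_at1 hK F (by norm_num : (1:ℤ) + 0 = 1) k,
            Nsmul_at0 hK F rfl k, Nsmul_at1 hK F rfl (0 + k)]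
        simp [smul_smul]
      · by_cases hj1 : j = 1
        · subst hj1
          rw [Kmul11 hK a b, Nsmul_at1 hK F rfl k, Nsmul_at1 hK F rfl (1 + k)]
          simp
        · have hb : b = 0 := hK.2.2.1 j hj0 hj1 b
          simp [hb]
    · have ha : a = 0 := hK.2.2.1 i hi0 hi1 a
      simp [ha]

lemma Nleibniz (hK : IsKoszulData K t e) (F : DGM R U) (i j : ℤ) (a : K.X i) (m : NX F j) :
    Nd t F (i + j) (Nsmul hK F i j a m) =
      pcast R (NX F) (by omega : i - 1 + j = i + j - 1) (Nsmul hK F (i - 1) j (K.d i a) m) +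
      sgn i • pcast R (NX F) (by omega : i + (j - 1) = i + j - 1)
        (Nsmul hK F i (j - 1) a (Nd t F j m)) := by
  by_cases hi0 : i = 0
  · subst hi0
    have hd : K.d 0 a = 0 := K.nonneg _ (by norm_num) _
    rw [Nsmul_at0 hK F rfl j, hd, Nsmul_at0 hK F rfl (j - 1)]
    simp [Prod.ext_iff, smul_smul, mul_comm]
  · by_cases hi1 : i = 1
    · subst hi1
      rw [Nsmul_at1 hK F rfl j, Kd_one hK a,
          Nsmul_at0 hK F (by norm_num : (1:ℤ) - 1 = 0) j, Nsmul_at1 hK F rfl (j - 1)]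
      simp [Prod.ext_iff, smul_smul, mul_comm]
    · have ha : a = 0 := hK.2.2.1 i hi0 hi1 a
      simp [ha]

set_option maxHeartbeats 1000000 in
/-- The cone of `t` on `F`, as a DG `K`-module. -/
noncomputable def NDGM (hK : IsKoszulData K t e) (F : DGM R U) : DGM R K where
  X := NX F
  d := Nd t F
  smul := Nsmul hK F
  d_sq := Nd_sq F
  one_smul' := None_smul hK F
  mul_smul' := Nmul_smul hK F
  leibniz := Nleibniz hK F

@[simp] lemma NDGM_X (hK : IsKoszulData K t e) (F : DGM R U) (i : ℤ) :
    (NDGM hK F).X i = NX F i := rfl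

lemma NDGM_d (hK : IsKoszulData K t e) (F : DGM R U) (i : ℤ) :
    (NDGM hK F).d i = Nd t F i := rfl

lemma NDGM_smul (hK : IsKoszulData K t e) (F : DGM R U) (i j : ℤ) :
    (NDGM hK F).smul i j = Nsmul hK F i j := rfl

end NDGMsec
section SigmaSec

variable {K : DGA R} {t : R} {e : K.X 1} {U : DGA R}

/-- Inclusion `F_j → N_j` as the second factor. -/
def iotaF (F : DGM R U) (j : ℤ) : F.X j →ₗ[R] NX F j :=
  LinearMap.prod 0 LinearMap.id

@[simp] lemma iotaF_apply (F : DGM R U) (j : ℤ) (m : F.X j) : iotaF F j m = (0, m) := rfl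

lemma Nd_iotaF (F : DGM R U) (j : ℤ) (m : F.X j) :
    Nd t F j (iotaF F j m) = iotaF F (j - 1) (F.d j m) := by
  simp

lemma iotaF_pcast (F : DGM R U) {i j : ℤ} (h : i = j) (m : F.X i) :
    iotaF F j (pcast R F.X h m) = pcast R (NX F) h (iotaF F i m) := by subst h; rfl

/-- The pairing `K_i ⊗ F_j → N_{i+j}`. -/
noncomputable def sigma' (hK : IsKoszulData K t e) (F : DGM R U) (i j : ℤ) :
    K.X i →ₗ[R] F.X j →ₗ[R] NX F (i + j) :=
  (Nsmul hK F i j).compl₂ (iotaF F j)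

@[simp] lemma sigma'_apply (hK : IsKoszulData K t e) (F : DGM R U) (i j : ℤ) (b : K.X i)
    (m : F.X j) : sigma' hK F i j b m = Nsmul hK F i j b (iotaF F j m) := rfl

lemma bal1 (hK : IsKoszulData K t e) (F : DGM R U) (i j : ℤ) (b : K.X i) (m : F.X j) :
    Nd t F (i + j) (sigma' hK F i j b m) =
      pcast R (NX F) (by omega : i - 1 + j = i + j - 1) (sigma' hK F (i - 1) j (K.d i b) m) +
      sgn i • pcast R (NX F) (by omega : i + (j - 1) = i + j - 1)
        (sigma' hK F i (j - 1) b (F.d j m)) := by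
  simp only [sigma'_apply]
  rw [← Nd_iotaF]
  exact Nleibniz hK F i j b (iotaF F j m)

lemma sigma_balanced (hK : IsKoszulData K t e) (hU : IsUnitDGA U) (φ : DGAMor U K)
    (F : DGM R U) : BalancedFam φ F (NDGM hK F) (sigma' hK F) := by
  refine ⟨fun i j b m => bal1 hK F i j b m,
    fun i' i j b' b m => (Nmul_smul hK F i' i j b' b (iotaF F j m)).symm,
    fun i i' j b a m => ?_⟩
  by_cases hi' : i' = 0
  · subst hi'
    have hb : K.mul i 0 b (φ.f 0 a) =
        coefMap U.one hU.1 a • pcast R K.X (add_zero i).symm b := by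
      conv_lhs => rw [coefMap_spec U.one hU.1 a]
      rw [map_smul, φ.map_one, map_smul]
      congr 1
      have h := K.mul_one' i b
      rw [pcast_eq_iff] at h
      exact h
    have hm : F.smul 0 j a m = coefMap U.one hU.1 a • pcast R F.X (zero_add j).symm m := by
      conv_lhs => rw [coefMap_spec U.one hU.1 a]
      rw [LinearMap.map_smul₂]
      congr 1
      have h := F.one_smul' j m
      rw [pcast_eq_iff] at h
      exact h
    show sigma' hK F (i + 0) j (K.mul i 0 b (φ.f 0 a)) m =
      pcast R (NX F) (by omega) (sigma' hK F i (0 + j) b (F.smul 0 j a m))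
    rw [hb, hm, LinearMap.map_smul₂, map_smul,
      fam2_pcast_left (sigma' hK F) (add_zero i).symm,
      fam2_pcast_right (sigma' hK F) (zero_add j).symm]
    simp
  · have ha : a = 0 := hU.2 i' hi' a
    show sigma' hK F (i + i') j (K.mul i i' b (φ.f i' a)) m =
      pcast R (NX F) (by omega) (sigma' hK F i (i' + j) b (F.smul i' j a m))
    simp only [ha, map_zero, LinearMap.map_zero₂, LinearMap.zero_apply]

end SigmaSec
section GSec

variable {K : DGA R} {t : R} {e : K.X 1} {U : DGA R} {F : DGM R U} {φ : DGAMor U K}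

/-- The comparison map `N → T`, `(x, y) ↦ e ⊗ x + 1 ⊗ y`. -/
noncomputable def gf (e : K.X 1) (T : BCData φ F) (j : ℤ) : NX F j →ₗ[R] T.T.X j :=
  (pcast R T.T.X (show 1 + (j - 1) = j by omega)).toLinearMap ∘ₗ (T.τ 1 (j - 1) e) ∘ₗ
    (LinearMap.fst R (F.X (j - 1)) (F.X j)) +
  (pcast R T.T.X (show 0 + j = j by omega)).toLinearMap ∘ₗ (T.τ 0 j K.one) ∘ₗ
    (LinearMap.snd R (F.X (j - 1)) (F.X j))

lemma gf_apply (T : BCData φ F) (j : ℤ) (n : NX F j) :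
    gf e T j n = pcast R T.T.X (show 1 + (j - 1) = j by omega) (T.τ 1 (j - 1) e n.1) +
      pcast R T.T.X (show 0 + j = j by omega) (T.τ 0 j K.one n.2) := rfl

lemma gf_comm_d (hK : IsKoszulData K t e) (T : BCData φ F) (hT : T.IsBaseChange) (i : ℤ)
    (n : NX F i) : gf e T (i - 1) (Nd t F i n) = T.T.d i (gf e T i n) := by
  have hb1 := hT.1.1 1 (i - 1) e n.1
  have hb0 := hT.1.1 0 i K.one n.2
  have hde : K.d 1 e = pcast R K.X (by norm_num : (0:ℤ) = 1 - 1) (t • K.one) := hK.2.2.2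
  have hd1 : K.d 0 K.one = 0 := K.nonneg _ (by norm_num) _
  rw [gf_apply, gf_apply, Nd_apply]
  simp only [map_add]
  rw [dfam_pcast T.T.d (show (1:ℤ) + (i - 1) = i by omega),
    dfam_pcast T.T.d (show (0:ℤ) + i = i by omega), hb1, hb0, hde, hd1,
    fam2_pcast_left T.τ (by norm_num : (0:ℤ) = 1 - 1) (t • K.one) n.1]
  simp only [LinearMap.map_smul₂, LinearMap.smul_apply, LinearMap.zero_apply, map_smul, map_add, map_neg, map_zero, LinearMap.map_zero₂,
    pcast_pcast, sgn_one, sgn_zero, neg_smul, one_smul, zero_add, Prod.fst, Prod.snd]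
  abel
end GSec
section GSec2

variable {K : DGA R} {t : R} {e : K.X 1} {U : DGA R} {F : DGM R U} {φ : DGAMor U K}

lemma g_sigma (hK : IsKoszulData K t e) (T : BCData φ F) (i j : ℤ) (b : K.X i) (m : F.X j) :
    gf e T (i + j) (sigma' hK F i j b m) = T.τ i j b m := by
  by_cases hi0 : i = 0
  · subst hi0
    rw [sigma'_apply, Nsmul_at0 hK F rfl j, iotaF_apply, pcast_rfl, map_smul,
      fam_pcast (gf e T) (show j = 0 + j by omega), gf_apply]
    conv_rhs => rw [kc0_spec hK b]
    rw [LinearMap.map_smul₂]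
    simp
  · by_cases hi1 : i = 1
    · subst hi1
      rw [sigma'_apply, Nsmul_at1 hK F rfl j, iotaF_apply, pcast_rfl, gf_apply]
      conv_rhs => rw [kc1_spec hK b]
      rw [LinearMap.map_smul₂]
      rw [fam2_pcast_right T.τ (show j = 1 + j - 1 by omega)]
      simp
    · have hb : b = 0 := hK.2.2.1 i hi0 hi1 b
      simp [hb]

lemma gh_tau (hK : IsKoszulData K t e) (T : BCData φ F) (h : DGMor T.T (NDGM hK F))
    (hh : ∀ (i j : ℤ) (b : K.X i) (m : F.X j),
      h.f (i + j) (T.τ i j b m) = sigma' hK F i j b m)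
    (k i : ℤ) (b : K.X i) (m : F.X (k - i)) (hp : i + (k - i) = k) :
    gf e T k (h.f k (pcast R T.T.X hp (T.τ i (k - i) b m))) =
      pcast R T.T.X hp (T.τ i (k - i) b m) := by
  have h1 : h.f k (pcast R T.T.X hp (T.τ i (k - i) b m)) =
      pcast R (NX F) hp (h.f (i + (k - i)) (T.τ i (k - i) b m)) :=
    fam_pcast h.f hp _
  rw [h1]
  have h2 : gf e T k (pcast R (NX F) hp (h.f (i + (k - i)) (T.τ i (k - i) b m))) =
      pcast R T.T.X hp (gf e T (i + (k - i)) (h.f (i + (k - i)) (T.τ i (k - i) b m))) :=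
    fam_pcast (gf e T) hp _
  rw [h2, hh, g_sigma hK T]

end GSec2

section Acyclic

variable {U : DGA R}

lemma Nacyclic [IsDomain R] (F : DGM R U) (t : R) (ht0 : t ≠ 0)
    (hFneg : ∀ i : ℤ, i < 0 → ∀ x : F.X i, x = 0)
    (εF : F.X 0 →ₗ[R] FractionRing R) (hsur : Function.Surjective εF)
    (hker : ∀ x : F.X 0, εF x = 0 ↔ ∃ w : F.X (0 + 1), F.bdry 0 w = x)
    (hexact : ∀ i : ℤ, 0 < i → F.HZeroAt i) (i : ℤ) (n : NX F i)
    (hn : Nd t F i n = 0) :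
    ∃ w : NX F (i + 1), pcast R (NX F) (by omega : i + 1 - 1 = i) (Nd t F (i + 1) w) = n := by
  have htQ : (algebraMap R (FractionRing R)) t ≠ 0 := fun h =>
    ht0 ((IsFractionRing.to_map_eq_zero_iff (K := FractionRing R)).mp h)
  simp only [Nd_apply, Prod.mk_eq_zero, neg_eq_zero] at hn
  obtain ⟨hd1, hd2⟩ := hn
  rcases lt_trichotomy i 0 with hi | hi | hi
  · have h1 : n.1 = 0 := hFneg _ (by omega) _
    have h2 : n.2 = 0 := hFneg _ (by omega) _
    have hn0 : n = 0 := by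
      rw [Prod.ext_iff]
      simp [h1, h2]
    refine ⟨0, ?_⟩
    rw [map_zero, map_zero, hn0]
  · subst hi
    have h1 : n.1 = 0 := hFneg _ (by norm_num) _
    obtain ⟨x', hx'⟩ := hsur ((algebraMap R (FractionRing R) t)⁻¹ * εF n.2)
    have hyx : εF (n.2 - t • x') = 0 := by
      rw [map_sub, map_smul, hx', Algebra.smul_def]
      field_simp
      simp
    obtain ⟨w, hw⟩ := (hker _).mp hyx
    refine ⟨(pcast R F.X (by omega : (0:ℤ) = 0 + 1 - 1) x', w), ?_⟩
    have hb : pcast R F.X (by omega : (0:ℤ) + 1 - 1 = 0) (F.d (0 + 1) w) = n.2 - t • x' := hw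
    rw [Nd_apply, pcast_NX]
    refine Prod.ext_iff.mpr ⟨?_, ?_⟩
    · exact (hFneg _ (by norm_num) _).trans h1.symm
    · simp only [map_add, map_smul, pcast_pcast, pcast_rfl, hb]
      abel
  · obtain ⟨w1, hw1⟩ : ∃ w : F.X i, F.d i w = n.1 := by
      by_cases hi1 : i = 1
      · subst hi1
        have hbd : εF (pcast R F.X (by norm_num : (1:ℤ) - 1 = 0) (F.d 1 n.2)) = 0 := by
          refine (hker _).mpr ⟨pcast R F.X (by norm_num : (1:ℤ) = 0 + 1) n.2, ?_⟩
          show pcast R F.X (by omega : (0:ℤ) + 1 - 1 = 0)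
            (F.d (0 + 1) (pcast R F.X (by norm_num : (1:ℤ) = 0 + 1) n.2)) = _
          rw [Fd_pcast, pcast_pcast]
        have h0 : εF (pcast R F.X (by norm_num : (1:ℤ) - 1 = 0) n.1) = 0 := by
          have h2 : t • (pcast R F.X (by norm_num : (1:ℤ) - 1 = 0) n.1) =
              - pcast R F.X (by norm_num : (1:ℤ) - 1 = 0) (F.d 1 n.2) := by
            rw [← map_smul, ← map_neg]
            congr 1
            exact eq_neg_of_add_eq_zero_left hd2
          have h3 := congrArg εF h2
          rw [map_smul, map_neg, hbd, neg_zero, Algebra.smul_def] at h3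
          rcases mul_eq_zero.mp h3 with h | h
          · exact absurd h htQ
          · exact h
        obtain ⟨w', hw'⟩ := (hker _).mp h0
        refine ⟨pcast R F.X (by norm_num : (0:ℤ) + 1 = 1) w', ?_⟩
        rw [Fd_pcast]
        have hw'' : pcast R F.X (by norm_num : (0:ℤ) + 1 - 1 = 0) (F.d (0 + 1) w') =
            pcast R F.X (by norm_num : (1:ℤ) - 1 = 0) n.1 := hw'
        rw [pcast_eq_iff] at hw''
        rw [hw'', pcast_pcast, pcast_pcast, pcast_rfl]
      · obtain ⟨w', hw'⟩ := hexact (i - 1) (by omega) n.1 hd1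
        refine ⟨pcast R F.X (by omega : i - 1 + 1 = i) w', ?_⟩
        rw [Fd_pcast]
        exact hw'
    have hcyc : F.d i (n.2 + t • w1) = 0 := by
      rw [map_add, map_smul, hw1, add_comm]
      exact hd2
    obtain ⟨y', hy'⟩ := hexact i hi _ hcyc
    have hy'' : pcast R F.X (by omega : i + 1 - 1 = i) (F.d (i + 1) y') = n.2 + t • w1 := hy'
    refine ⟨(pcast R F.X (by omega : i = i + 1 - 1) (-w1), y'), ?_⟩
    rw [Nd_apply, pcast_NX]
    refine Prod.ext_iff.mpr ⟨?_, ?_⟩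
    · simp only [Fd_pcast, map_neg, hw1, pcast_pcast, neg_neg, pcast_rfl]
    · simp only [map_add, map_smul, pcast_pcast, pcast_rfl, hy'']
      module

end Acyclic
theorem nonunique_quasi_lifts (R : Type) [CommRing R] [IsNoetherianRing R]
    [IsLocalRing R] [IsDomain R] (hnf : ¬ IsField R)
    (t : R) (ht0 : t ≠ 0) (htm : t ∈ IsLocalRing.maximalIdeal R)
    (K : DGA R) (e : K.X 1) (hK : IsKoszulData K t e)
    (U : DGA R) (hU : IsUnitDGA U) (φ : DGAMor U K)
    (F : DGM R U) (hFfree : ∀ i, Module.Free R (F.X i))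
    (hFneg : ∀ i : ℤ, i < 0 → ∀ x : F.X i, x = 0)
    (εF : F.X 0 →ₗ[R] FractionRing R) (hsur : Function.Surjective εF)
    (hker : ∀ x : F.X 0, εF x = 0 ↔ ∃ w : F.X (0 + 1), F.bdry 0 w = x)
    (hexact : ∀ i : ℤ, 0 < i → F.HZeroAt i) :
    (∀ T : BCData φ F, T.IsBaseChange → ∀ i : ℤ, T.T.HZeroAt i) ∧
    (∀ Z : DGM R U, (∀ (i : ℤ) (x : Z.X i), x = 0) →
      (∀ TZ : BCData φ Z, TZ.IsBaseChange → ∀ i : ℤ, TZ.T.HZeroAt i) ∧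
      ¬ QuasiIsomorphic F Z) := by
  constructor
  · intro T hT i
    obtain ⟨h, hh, -⟩ := hT.2.2 (NDGM hK F) (sigma' hK F) (sigma_balanced hK hU φ F)
    have hgh : ∀ (k : ℤ) (x : T.T.X k), gf e T k (h.f k x) = x := by
      intro k x
      obtain ⟨l, ii, bb, mm, hxe⟩ := hT.2.1 k x
      rw [hxe, map_sum]
      exact (map_sum (gf e T k) _ _).trans
        (Finset.sum_congr rfl fun s _ => gh_tau hK T h hh k (ii s) (bb s) (mm s) _)
    intro x hx
    have hdz : Nd t F i (h.f i x) = 0 := by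
      have h2 := h.comm_d i x
      rw [hx, map_zero] at h2
      exact h2.symm
    obtain ⟨w, hw⟩ := Nacyclic F t ht0 hFneg εF hsur hker hexact i (h.f i x) hdz
    refine ⟨gf e T (i + 1) w, ?_⟩
    show pcast R T.T.X (by omega : i + 1 - 1 = i) (T.T.d (i + 1) (gf e T (i + 1) w)) = x
    rw [← gf_comm_d hK T hT (i + 1) w,
      ← fam_pcast (gf e T) (by omega : i + 1 - 1 = i), hw]
    exact hgh i x
  · intro Z hZ
    constructor
    · intro TZ hTZ i x hx
      have hx0 : x = 0 := by
        obtain ⟨l, ii, bb, mm, hxe⟩ := hTZ.2.1 i x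
        rw [hxe]
        refine Finset.sum_eq_zero fun s _ => ?_
        rw [hZ _ (mm s), map_zero, map_zero]
      exact ⟨0, by rw [map_zero, hx0]⟩
    · intro hq
      have hiff := hzero_zero_of_qiso hq
      have hZ0 : Z.HZeroAt 0 := fun y _ => ⟨0, by rw [map_zero]; exact (hZ 0 y).symm⟩
      have hF0 : F.HZeroAt 0 := hiff.mpr hZ0
      obtain ⟨x, hx1⟩ := hsur 1
      have hdx : F.d 0 x = 0 := hFneg _ (by norm_num) _
      obtain ⟨w, hw⟩ := hF0 x hdx
      have h0 : εF x = 0 := (hker x).mpr ⟨w, hw⟩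
      rw [hx1] at h0
      exact one_ne_zero h0

end DGPaper
end
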